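/- For each n ≥ 1, define the polynomial E_n(x) by E_n(k) = h_n(1,2,…,k) for all positive integers k (so E_n(k) = S(n+k, k)). Then the coefficient of x in E_n(x) equals B_n / n, where B_n is the n-th Bernoulli number (convention B_1 = 1/2). -/

import Mathlib

open scoped Classical

/-- The Stirling number of the second kind `S(m, k)`: the number of partitions of an
`m`-element set into `k` non-empty blocks. -/
noncomputable def stirling2 (m k : ℕ) : ℕ :=
  Nat.card {P : Finpartition (Finset.univ : Finset (Fin m)) // P.parts.card = k}

/-- The complete homogeneous symmetric polynomial of degree `n` evaluated at
`(1, 2, …, k)`, i.e. `∑_{1 ≤ z₁ ≤ ⋯ ≤ z_n ≤ k} z₁ ⋯ z_n`. -/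
noncomputable def hNat (n k : ℕ) : ℕ :=
  ∑ f ∈ Finset.univ.filter (fun f : Fin n → Fin k => Monotone f), ∏ i, ((f i : ℕ) + 1)

open Polynomial Finset

lemma hNat_zero (k : ℕ) : hNat 0 k = 1 := by
  simp [hNat, Finset.filter_true_of_mem, Monotone]

lemma hNat_succ_zero (n : ℕ) : hNat (n+1) 0 = 0 := by
  simp [hNat]

lemma snoc_monotone {n k : ℕ} {g : Fin n → Fin (k+1)} (hg : Monotone g) :
    Monotone (Fin.snoc g (Fin.last k)) := by
  intro i j hij
  rcases Fin.eq_castSucc_or_eq_last j with ⟨j', rfl⟩ | rfl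
  · rcases Fin.eq_castSucc_or_eq_last i with ⟨i', rfl⟩ | rfl
    · rw [Fin.snoc_castSucc, Fin.snoc_castSucc]
      exact hg (Fin.castSucc_le_castSucc_iff.mp hij)
    · exact absurd (lt_of_le_of_lt hij (Fin.castSucc_lt_last j')) (lt_irrefl _)
  · rw [Fin.snoc_last]; exact Fin.le_last _

-- the key recurrence
lemma hNat_rec (n k : ℕ) :
    hNat (n+1) (k+1) = hNat (n+1) k + (k+1) * hNat n (k+1) := by
  classical
  rw [hNat]
  rw [← Finset.sum_filter_add_sum_filter_not _ (fun f => f (Fin.last n) = Fin.last k),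
    add_comm (hNat (n+1) k)]
  congr 1
  · -- part A : f last = last ; equals (k+1) * hNat n (k+1)
    rw [hNat, Finset.mul_sum]
    refine Finset.sum_bij' (fun f _ => f ∘ Fin.castSucc)
      (fun g _ => Fin.snoc g (Fin.last k)) ?_ ?_ ?_ ?_ ?_
    · intro f hf
      simp only [Finset.mem_filter, Finset.mem_univ, true_and] at hf ⊢
      exact hf.1.comp (fun i j h => Fin.castSucc_le_castSucc_iff.mpr h)
    · intro g hg
      simp only [Finset.mem_filter, Finset.mem_univ, true_and] at hg ⊢
      exact ⟨snoc_monotone hg, Fin.snoc_last _ _⟩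
    · intro f hf
      simp only [Finset.mem_filter, Finset.mem_univ, true_and] at hf
      funext i
      refine Fin.lastCases ?_ ?_ i
      · simp [Fin.snoc_last, hf.2]
      · intro j; simp [Fin.snoc_castSucc]
    · intro g hg
      funext i
      simp [Fin.snoc_castSucc]
    · intro f hf
      simp only [Finset.mem_filter, Finset.mem_univ, true_and] at hf
      rw [Fin.prod_univ_castSucc, hf.2]
      simp [Fin.last, mul_comm]
  · -- part B : f last ≠ last ; equals hNat (n+1) k
    rw [hNat]
    have key : ∀ f : Fin (n+1) → Fin (k+1),
        f ∈ (Finset.univ.filter (fun f : Fin (n+1) → Fin (k+1) => Monotone f)).filter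
          (fun f => ¬ f (Fin.last n) = Fin.last k) → ∀ i, ((f i : ℕ) < k) := by
      intro f hf i
      simp only [Finset.mem_filter, Finset.mem_univ, true_and] at hf
      have h1 : f i ≤ f (Fin.last n) := hf.1 (Fin.le_last i)
      have h2 : f (Fin.last n) < Fin.last k := lt_of_le_of_ne (Fin.le_last _) hf.2
      exact lt_of_le_of_lt h1 h2
    refine Finset.sum_bij' (fun f hf i => Fin.castLT (f i) (key f hf i))
      (fun g _ => fun i => (g i).castSucc) ?_ ?_ ?_ ?_ ?_
    · intro f hf
      simp only [Finset.mem_filter, Finset.mem_univ, true_and] at hf ⊢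
      intro i j hij
      exact hf.1 hij
    · intro g hg
      simp only [Finset.mem_filter, Finset.mem_univ, true_and] at hg ⊢
      constructor
      · intro i j hij; exact Fin.castSucc_le_castSucc_iff.mpr (hg hij)
      · exact Fin.ne_of_lt (Fin.castSucc_lt_last _)
    · intro f hf; funext i; simp [Fin.castSucc_castLT]
    · intro g hg; funext i; rfl
    · intro f hf; apply Finset.prod_congr rfl; intro i _; rfl

noncomputable def Faul (p : ℕ) : ℚ[X] :=
  ∑ i ∈ range (p+1), C (bernoulli' i * (p+1).choose i / (p+1)) * X^(p+1-i)

lemma Faul_eval (p k : ℕ) : (Faul p).eval (k:ℚ) = ∑ j ∈ Finset.Ico 1 (k+1), (j:ℚ)^p := by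
  rw [sum_Ico_pow]
  simp only [Faul, eval_finset_sum, eval_mul, eval_C, eval_pow, eval_X]
  apply Finset.sum_congr rfl; intro i _
  push_cast
  ring

lemma Faul_coeff_zero (p : ℕ) : (Faul p).coeff 0 = 0 := by
  simp only [Faul, finset_sum_coeff, coeff_C_mul, coeff_X_pow]
  apply Finset.sum_eq_zero
  intro i hi
  simp only [Finset.mem_range] at hi
  rw [if_neg (by omega), mul_zero]

lemma Faul_coeff_one (p : ℕ) : (Faul p).coeff 1 = bernoulli' p := by
  simp only [Faul, finset_sum_coeff, coeff_C_mul, coeff_X_pow]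
  rw [Finset.sum_eq_single p]
  · rw [if_pos (by omega), mul_one, Nat.choose_succ_self_right]
    field_simp
    push_cast
    ring
  · intro i hi hne
    simp only [Finset.mem_range] at hi
    rw [if_neg (by omega), mul_zero]
  · intro h; simp at h

noncomputable def H (n k : ℕ) : ℚ := (hNat n k : ℚ)

noncomputable def pQ (m k : ℕ) : ℚ := ∑ j ∈ Finset.Ico 1 (k+1), (j:ℚ)^m

lemma H_zero (k : ℕ) : H 0 k = 1 := by simp [H, hNat_zero]
lemma H_succ_zero (n : ℕ) : H (n+1) 0 = 0 := by simp [H, hNat_succ_zero]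
lemma H_rec (n k : ℕ) : H (n+1) (k+1) = H (n+1) k + ((k:ℚ)+1) * H n (k+1) := by
  rw [H, H, H, hNat_rec]; push_cast; ring

lemma pQ_zero (m : ℕ) : pQ m 0 = 0 := by simp [pQ]
lemma pQ_rec (m k : ℕ) : pQ m (k+1) = pQ m k + ((k:ℚ)+1)^m := by
  rw [pQ, pQ, Finset.sum_Ico_succ_top (by omega)]
  push_cast; ring

noncomputable def AQ (Q : ℚ[X]) : ℚ[X] := ∑ p ∈ range (Q.natDegree+1), C (Q.coeff p) * Faul p

lemma AQ_eval (Q : ℚ[X]) (k : ℕ) :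
    (AQ Q).eval (k:ℚ) = ∑ j ∈ Finset.Ico 1 (k+1), Q.eval (j:ℚ) := by
  simp only [AQ, eval_finset_sum, eval_mul, eval_C, Faul_eval, Finset.mul_sum]
  rw [Finset.sum_comm]
  apply Finset.sum_congr rfl
  intro j _
  rw [eval_eq_sum_range]

lemma AQ_coeff_zero (Q : ℚ[X]) : (AQ Q).coeff 0 = 0 := by
  simp [AQ, finset_sum_coeff, coeff_C_mul, Faul_coeff_zero]

noncomputable def P : ℕ → ℚ[X] := fun n => Nat.rec 1 (fun _ Pn => AQ (X * Pn)) n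

lemma P_zero : P 0 = 1 := rfl
lemma P_succ (n : ℕ) : P (n+1) = AQ (X * P n) := rfl

lemma P_coeff_zero (n : ℕ) : (P (n+1)).coeff 0 = 0 := AQ_coeff_zero _

lemma P_eval (n k : ℕ) : (P n).eval (k:ℚ) = H n k := by
  induction n generalizing k with
  | zero => simp [P_zero, H_zero]
  | succ n ih =>
    rw [P_succ, AQ_eval]
    induction k with
    | zero => simp [H_succ_zero]
    | succ k ihk =>
      rw [Finset.sum_Ico_succ_top (by omega), ihk, H_rec, eval_mul, eval_X]
      have h := ih (k+1)
      push_cast at h ⊢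
      rw [h]

lemma H_aux (n k : ℕ) :
    H (n+1) (k+1) = ∑ m ∈ range (n+2), ((k:ℚ)+1)^m * H (n+1-m) k := by
  induction n with
  | zero =>
    rw [H_rec]
    simp [Finset.sum_range_succ, H_zero]
  | succ n ih =>
    rw [H_rec, ih, Finset.sum_range_succ' _ (n+2)]
    simp only [pow_zero, one_mul, Nat.sub_zero]
    rw [Finset.mul_sum]
    rw [add_comm]
    congr 1
    apply Finset.sum_congr rfl
    intro m hm
    have : n + 2 - (m+1) = n + 1 - m := by omega
    rw [this]
    ring

lemma newton (n : ℕ) : ∀ k, ((n:ℚ)+1) * H (n+1) k = ∑ m ∈ range (n+1), pQ (m+1) k * H (n-m) k := by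
  induction n with
  | zero =>
    intro k
    simp only [Finset.range_one, Finset.sum_singleton, Nat.sub_zero, H_zero, mul_one,
      Nat.cast_zero, zero_add, one_mul]
    induction k with
    | zero => rw [H_succ_zero, pQ_zero]
    | succ k ihk => rw [H_rec, pQ_rec, ihk, H_zero]; ring
  | succ n ih =>
    intro k
    induction k with
    | zero =>
      rw [H_succ_zero, mul_zero]
      symm; apply Finset.sum_eq_zero
      intro m _; rw [pQ_zero, zero_mul]
    | succ k ihk =>
      have hc : ((n+1:ℕ):ℚ) + 1 = (n:ℚ)+1+1 := by push_cast; ring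
      rw [hc]
      simp only [show n+1+1 = n+2 from rfl] at ihk ⊢
      rw [hc] at ihk
      -- RHS at k+1
      have step1 : ∑ m ∈ range (n+2), pQ (m+1) (k+1) * H (n+1-m) (k+1)
          = (∑ m ∈ range (n+2), pQ (m+1) (k+1) * H (n+1-m) k)
            + ((k:ℚ)+1) * ∑ m ∈ range (n+1), pQ (m+1) (k+1) * H (n-m) (k+1) := by
        rw [Finset.sum_range_succ, Finset.sum_range_succ (fun m => pQ (m+1) (k+1) * H (n+1-m) k)]
        rw [Finset.mul_sum]
        have e1 : ∀ m ∈ range (n+1),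
            pQ (m+1) (k+1) * H (n+1-m) (k+1)
            = pQ (m+1) (k+1) * H (n+1-m) k + ((k:ℚ)+1) * (pQ (m+1) (k+1) * H (n-m) (k+1)) := by
          intro m hm
          simp only [Finset.mem_range] at hm
          have h2 : n + 1 - m = (n - m) + 1 := by omega
          rw [h2, H_rec]
          ring
        rw [Finset.sum_congr rfl e1, Finset.sum_add_distrib]
        have h3 : n + 1 - (n+1) = 0 := by omega
        rw [h3]
        simp only [H_zero]
        ring
      have step2 : ∑ m ∈ range (n+2), pQ (m+1) (k+1) * H (n+1-m) k
          = ((n:ℚ)+1+1) * H (n+2) k + ((k:ℚ)+1) * H (n+1) (k+1) := by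
        have e2 : ∀ m ∈ range (n+2),
            pQ (m+1) (k+1) * H (n+1-m) k
            = pQ (m+1) k * H (n+1-m) k + ((k:ℚ)+1) * (((k:ℚ)+1)^m * H (n+1-m) k) := by
          intro m _
          rw [pQ_rec]
          ring
        rw [Finset.sum_congr rfl e2, Finset.sum_add_distrib, ← Finset.mul_sum, ← H_aux, ← ihk]
      rw [H_rec, step1, step2, ← ih (k+1)]
      ring

lemma eq_of_eval_nat {p q : ℚ[X]} (h : ∀ k : ℕ, 0 < k → p.eval (k:ℚ) = q.eval (k:ℚ)) :
    p = q := by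
  have h2 : p - q = 0 := by
    apply Polynomial.eq_zero_of_infinite_isRoot
    apply Set.infinite_of_injective_forall_mem
      (f := fun k : ℕ => (((k+1:ℕ)):ℚ))
    · intro a b hab
      simpa using hab
    · intro k
      simp only [Set.mem_setOf_eq, IsRoot, eval_sub]
      rw [h (k+1) (by omega), sub_self]
  exact sub_eq_zero.mp h2

lemma poly_newton (n : ℕ) :
    ((n:ℚ)+1) • P (n+1) = ∑ m ∈ range (n+1), Faul (m+1) * P (n-m) := by
  apply eq_of_eval_nat
  intro k _
  rw [eval_smul, smul_eq_mul, P_eval, eval_finset_sum]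
  have hterm : ∀ m ∈ range (n+1),
      (Faul (m+1) * P (n-m)).eval (k:ℚ) = pQ (m+1) k * H (n-m) k := by
    intro m _
    rw [eval_mul, P_eval, Faul_eval]
    rfl
  rw [Finset.sum_congr rfl hterm]
  exact newton n k

lemma P_coeff_one (n : ℕ) : (P (n+1)).coeff 1 = bernoulli' (n+1) / ((n:ℚ)+1) := by
  have h := congrArg (fun q : ℚ[X] => q.coeff 1) (poly_newton n)
  simp only [coeff_smul, finset_sum_coeff, smul_eq_mul] at h
  have hm : ∀ m ∈ range (n+1), (Faul (m+1) * P (n-m)).coeff 1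
      = bernoulli' (m+1) * (P (n-m)).coeff 0 := by
    intro m _
    rw [coeff_mul, Finset.Nat.sum_antidiagonal_eq_sum_range_succ_mk]
    simp [Finset.sum_range_succ, Faul_coeff_zero, Faul_coeff_one]
  rw [Finset.sum_congr rfl hm] at h
  rw [Finset.sum_eq_single n] at h
  · rw [Nat.sub_self] at h
    have : (P 0).coeff 0 = 1 := by simp [P_zero]
    rw [this, mul_one] at h
    have hne : ((n:ℚ)+1) ≠ 0 := by positivity
    field_simp
    linarith [h]
  · intro m hmem hne
    simp only [Finset.mem_range] at hmem
    have : n - m = (n - m - 1) + 1 := by omega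
    rw [this, P_coeff_zero, mul_zero]
  · intro hmem
    simp at hmem

theorem stmt_11 (n : ℕ) (hn : 0 < n) (E : Polynomial ℚ)
    (hval : ∀ k : ℕ, 0 < k → E.eval (k : ℚ) = hNat n k) :
    E.coeff 1 = bernoulli' n / n := by
  obtain ⟨m, rfl⟩ : ∃ m, n = m + 1 := ⟨n - 1, by omega⟩
  have hE : E = P (m+1) := by
    apply eq_of_eval_nat
    intro k hk
    rw [hval k hk, P_eval]
    rfl
  rw [hE, P_coeff_one]
  push_cast
  ring
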